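/- Let τ = (1-√5)/2, λ ≥ 1, and suppose f(z) = z + a₂z² + a₃z³ + … is bi-univalent with z[f'(z)]^λ/f(z) ≺ p̃(z) and w[g'(w)]^λ/g(w) ≺ p̃(w) for g = f⁻¹, where p̃(z) = (1+τ²z²)/(1-τz-τ²z²). Then |a₂| ≤ |τ|/√((2λ-1)[τ(3-5λ) + 2λ - 1]). -/

import Mathlib

open Filter Metric Set Complex Topology

private lemma aderiv {u : ℂ → ℂ} {x : ℂ} (hu : AnalyticAt ℂ u x) :
    AnalyticAt ℂ (deriv u) x := by
  obtain ⟨s, hsmem, h⟩ := hu.eventually_analyticAt.exists_mem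
  obtain ⟨t, hts, hot, hxt⟩ := _root_.mem_nhds_iff.mp hsmem
  have H : AnalyticOnNhd ℂ u t := fun y hy => h y (hts hy)
  exact H.deriv x hxt

private lemma subord_coeffs (t L : ℂ) (f w : ℂ → ℂ)
    (hfa : AnalyticAt ℂ f 0) (hwa : AnalyticAt ℂ w 0)
    (hf0 : f 0 = 0) (hf1 : deriv f 0 = 1) (hw0 : w 0 = 0)
    (heq : (fun z => z * (deriv f z) ^ L * (1 - t * w z - t ^ 2 * w z ^ 2)) =ᶠ[nhds (0:ℂ)]
           (fun z => f z * (1 + t ^ 2 * w z ^ 2))) :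
    2 * (L * deriv (deriv f) 0 - t * deriv w 0) = deriv (deriv f) 0 ∧
    3 * ((L * (L - 1) * (deriv (deriv f) 0) ^ 2 + L * deriv (deriv (deriv f)) 0)
        + 2 * (L * deriv (deriv f) 0) * (-(t * deriv w 0))
        + (-(t * deriv (deriv w) 0) - 2 * t ^ 2 * (deriv w 0) ^ 2))
      = deriv (deriv (deriv f)) 0 + 6 * t ^ 2 * (deriv w 0) ^ 2 := by
  set F2 := deriv (deriv f) 0 with hF2
  set F3 := deriv (deriv (deriv f)) 0 with hF3
  set W1 := deriv w 0 with hW1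
  set W2 := deriv (deriv w) 0 with hW2
  have hf' : AnalyticAt ℂ (deriv f) 0 := aderiv hfa
  have hf'' : AnalyticAt ℂ (deriv (deriv f)) 0 := aderiv hf'
  have hw' : AnalyticAt ℂ (deriv w) 0 := aderiv hwa
  have hw'' : AnalyticAt ℂ (deriv (deriv w)) 0 := aderiv hw'
  have slit0 : deriv f 0 ∈ slitPlane := by rw [hf1]; exact Complex.one_mem_slitPlane
  have evslit : ∀ᶠ z in nhds (0:ℂ), deriv f z ∈ slitPlane :=
    hf'.continuousAt.eventually_mem (Complex.isOpen_slitPlane.mem_nhds slit0)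
  set h : ℂ → ℂ := fun z => (deriv f z) ^ L with hh_def
  set D : ℂ → ℂ := fun z => 1 - t * w z - t ^ 2 * w z ^ 2 with hD_def
  set N : ℂ → ℂ := fun z => 1 + t ^ 2 * w z ^ 2 with hN_def
  have hh : AnalyticAt ℂ h 0 := hf'.cpow analyticAt_const slit0
  have hD : AnalyticAt ℂ D 0 :=
    (analyticAt_const.sub (analyticAt_const.mul hwa)).sub (analyticAt_const.mul (hwa.pow 2))
  have hN : AnalyticAt ℂ N 0 := analyticAt_const.add (analyticAt_const.mul (hwa.pow 2))
  set G : ℂ → ℂ := fun z => h z * D z with hG_def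
  have hG : AnalyticAt ℂ G 0 := hh.mul hD
  -- derivative of h
  have evh : deriv h =ᶠ[nhds (0:ℂ)] fun z => L * ((deriv f z) ^ (L - 1) * deriv (deriv f) z) := by
    filter_upwards [evslit, hf'.eventually_analyticAt] with z hs hz
    rw [(hz.differentiableAt.hasDerivAt.cpow_const hs).deriv]; ring
  have hval0 : h 0 = 1 := by simp [hh_def, hf1]
  have hval1 : deriv h 0 = L * F2 := by
    rw [evh.eq_of_nhds, hf1, hF2]; simp
  have hval2 : deriv (deriv h) 0 = L * (L - 1) * F2 ^ 2 + L * F3 := by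
    rw [evh.deriv_eq]
    have h1 : HasDerivAt (fun z => (deriv f z) ^ (L - 1))
        ((L - 1) * (deriv f 0) ^ (L - 1 - 1) * deriv (deriv f) 0) 0 :=
      hf'.differentiableAt.hasDerivAt.cpow_const slit0
    have h2 : HasDerivAt (deriv (deriv f)) F3 0 := hf''.differentiableAt.hasDerivAt
    rw [((h1.fun_mul h2).const_mul L).deriv, hf1]
    simp [hF2]; ring
  -- derivative of D
  have evD : deriv D =ᶠ[nhds (0:ℂ)] fun z => -(t * deriv w z) - 2 * t ^ 2 * (w z * deriv w z) := by
    filter_upwards [hwa.eventually_analyticAt] with z hz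
    have hwd := hz.differentiableAt.hasDerivAt
    rw [(((hwd.const_mul t).const_sub 1).fun_sub ((hwd.fun_pow 2).const_mul (t ^ 2))).deriv]
    ring
  have Dval0 : D 0 = 1 := by simp [hD_def, hw0]
  have Dval1 : deriv D 0 = -(t * W1) := by rw [evD.eq_of_nhds]; simp [hw0, hW1]
  have Dval2 : deriv (deriv D) 0 = -(t * W2) - 2 * t ^ 2 * W1 ^ 2 := by
    rw [evD.deriv_eq]
    have h1 : HasDerivAt (fun z => t * deriv w z) (t * W2) 0 :=
      hw'.differentiableAt.hasDerivAt.const_mul t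
    have h2 : HasDerivAt (fun z => w z * deriv w z) (W1 * deriv w 0 + w 0 * W2) 0 :=
      hwa.differentiableAt.hasDerivAt.mul hw'.differentiableAt.hasDerivAt
    rw [(h1.fun_neg.fun_sub (h2.const_mul (2 * t ^ 2))).deriv, hw0]
    ring
  -- derivative of N
  have evN : deriv N =ᶠ[nhds (0:ℂ)] fun z => 2 * t ^ 2 * (w z * deriv w z) := by
    filter_upwards [hwa.eventually_analyticAt] with z hz
    have hwd := hz.differentiableAt.hasDerivAt
    rw [((hwd.fun_pow 2).const_mul (t ^ 2)).const_add 1 |>.deriv]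
    ring
  have Nval0 : N 0 = 1 := by simp [hN_def, hw0]
  have Nval1 : deriv N 0 = 0 := by rw [evN.eq_of_nhds]; simp [hw0]
  have Nval2 : deriv (deriv N) 0 = 2 * t ^ 2 * W1 ^ 2 := by
    rw [evN.deriv_eq]
    have h2 : HasDerivAt (fun z => w z * deriv w z) (W1 * deriv w 0 + w 0 * W2) 0 :=
      hwa.differentiableAt.hasDerivAt.mul hw'.differentiableAt.hasDerivAt
    rw [(h2.const_mul (2 * t ^ 2)).deriv, hw0]
    ring
  -- RHS = f * N
  set R : ℂ → ℂ := fun z => f z * N z with hR_def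
  have hN' : AnalyticAt ℂ (deriv N) 0 := aderiv hN
  have hN'' : AnalyticAt ℂ (deriv (deriv N)) 0 := aderiv hN'
  have evR1 : deriv R =ᶠ[nhds (0:ℂ)] fun z => deriv f z * N z + f z * deriv N z := by
    filter_upwards [hfa.eventually_analyticAt, hN.eventually_analyticAt] with z h1 h2
    rw [hR_def]
    exact deriv_mul h1.differentiableAt h2.differentiableAt
  have evR2 : deriv (fun z => deriv f z * N z + f z * deriv N z) =ᶠ[nhds (0:ℂ)]
      fun z => (deriv (deriv f) z * N z + deriv f z * deriv N z)
        + (deriv f z * deriv N z + f z * deriv (deriv N) z) := by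
    filter_upwards [hfa.eventually_analyticAt, hf'.eventually_analyticAt,
      hN.eventually_analyticAt, hN'.eventually_analyticAt] with z h1 h2 h3 h4
    rw [deriv_fun_add (h2.differentiableAt.fun_mul h3.differentiableAt)
        (h1.differentiableAt.fun_mul h4.differentiableAt),
      deriv_fun_mul h2.differentiableAt h3.differentiableAt,
      deriv_fun_mul h1.differentiableAt h4.differentiableAt]
  have R2val : deriv (deriv R) 0 = F2 := by
    rw [evR1.deriv_eq, evR2.eq_of_nhds]
    rw [Nval0, Nval1, hf0, hf1]
    ring
  have R3val : deriv (deriv (deriv R)) 0 = F3 + 6 * t ^ 2 * W1 ^ 2 := by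
    have ev := (evR1.deriv).trans evR2
    rw [ev.deriv_eq]
    have hA : HasDerivAt (fun z => deriv (deriv f) z * N z)
        (F3 * N 0 + deriv (deriv f) 0 * deriv N 0) 0 :=
      hf''.differentiableAt.hasDerivAt.mul hN.differentiableAt.hasDerivAt
    have hB : HasDerivAt (fun z => deriv f z * deriv N z)
        (F2 * deriv N 0 + deriv f 0 * deriv (deriv N) 0) 0 :=
      hf'.differentiableAt.hasDerivAt.mul hN'.differentiableAt.hasDerivAt
    have hC : HasDerivAt (fun z => f z * deriv (deriv N) z)
        (deriv f 0 * deriv (deriv N) 0 + f 0 * deriv (deriv (deriv N)) 0) 0 :=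
      hfa.differentiableAt.hasDerivAt.mul hN''.differentiableAt.hasDerivAt
    rw [((hA.fun_add hB).fun_add (hB.fun_add hC)).deriv, Nval0, Nval1, Nval2, hf0, hf1]
    ring
  -- LHS = z * G
  have hG' : AnalyticAt ℂ (deriv G) 0 := aderiv hG
  have hG'' : AnalyticAt ℂ (deriv (deriv G)) 0 := aderiv hG'
  have evG : deriv G =ᶠ[nhds (0:ℂ)] fun z => deriv h z * D z + h z * deriv D z := by
    filter_upwards [hh.eventually_analyticAt, hD.eventually_analyticAt] with z h1 h2
    rw [hG_def]
    exact deriv_mul h1.differentiableAt h2.differentiableAt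
  have Gval1 : deriv G 0 = L * F2 - t * W1 := by
    rw [evG.eq_of_nhds]
    rw [hval0, hval1, Dval0, Dval1]
    ring
  have Gval2 : deriv (deriv G) 0 = (L * (L - 1) * F2 ^ 2 + L * F3)
      + 2 * (L * F2) * (-(t * W1)) + (-(t * W2) - 2 * t ^ 2 * W1 ^ 2) := by
    rw [evG.deriv_eq]
    have hA : HasDerivAt (fun z => deriv h z * D z)
        (deriv (deriv h) 0 * D 0 + deriv h 0 * deriv D 0) 0 :=
      (aderiv hh).differentiableAt.hasDerivAt.mul hD.differentiableAt.hasDerivAt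
    have hB : HasDerivAt (fun z => h z * deriv D z)
        (deriv h 0 * deriv D 0 + h 0 * deriv (deriv D) 0) 0 :=
      hh.differentiableAt.hasDerivAt.mul (aderiv hD).differentiableAt.hasDerivAt
    rw [(hA.fun_add hB).deriv, hval0, hval1, hval2, Dval0, Dval1, Dval2]
    ring
  have evL1 : deriv (fun z => z * G z) =ᶠ[nhds (0:ℂ)] fun z => G z + z * deriv G z := by
    filter_upwards [hG.eventually_analyticAt] with z h1
    rw [deriv_fun_mul differentiableAt_fun_id h1.differentiableAt, deriv_id'']
    ring
  have evL2 : deriv (fun z => G z + z * deriv G z) =ᶠ[nhds (0:ℂ)]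
      fun z => deriv G z + (deriv G z + z * deriv (deriv G) z) := by
    filter_upwards [hG.eventually_analyticAt, hG'.eventually_analyticAt] with z h1 h2
    rw [deriv_fun_add h1.differentiableAt (differentiableAt_fun_id.fun_mul h2.differentiableAt),
      deriv_fun_mul differentiableAt_fun_id h2.differentiableAt, deriv_id'']
    ring
  have L2val : deriv (deriv (fun z => z * G z)) 0 = 2 * deriv G 0 := by
    rw [evL1.deriv_eq, evL2.eq_of_nhds]
    ring
  have L3val : deriv (deriv (deriv (fun z => z * G z))) 0 = 3 * deriv (deriv G) 0 := by
    have ev := (evL1.deriv).trans evL2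
    rw [ev.deriv_eq]
    have hA : HasDerivAt (deriv G) (deriv (deriv G) 0) 0 := hG'.differentiableAt.hasDerivAt
    have hB : HasDerivAt (fun z => z * deriv (deriv G) z)
        (1 * deriv (deriv G) 0 + 0 * deriv (deriv (deriv G)) 0) 0 :=
      (hasDerivAt_id 0).mul hG''.differentiableAt.hasDerivAt
    rw [(hA.fun_add (hA.fun_add hB)).deriv]
    ring
  -- connect via heq
  have heq' : (fun z => z * G z) =ᶠ[nhds (0:ℂ)] R := by
    have e1 : (fun z : ℂ => z * G z)
        = fun z => z * (deriv f z) ^ L * (1 - t * w z - t ^ 2 * w z ^ 2) := by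
      funext z; rw [hG_def]; ring
    have e2 : R = fun z => f z * (1 + t ^ 2 * w z ^ 2) := by
      funext z; rw [hR_def]
    rw [e1, e2]
    exact heq
  have key2 : 2 * deriv G 0 = F2 := by
    have H := (heq'.deriv.deriv).eq_of_nhds
    rw [L2val, R2val] at H
    exact H
  have key3 : 3 * deriv (deriv G) 0 = F3 + 6 * t ^ 2 * W1 ^ 2 := by
    have H := (heq'.deriv.deriv.deriv).eq_of_nhds
    rw [L3val, R3val] at H
    exact H
  constructor
  · rw [Gval1] at key2; exact key2
  · rw [Gval2] at key3; exact key3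
private lemma inv_coeffs (f g : ℂ → ℂ) (hfa : AnalyticAt ℂ f 0) (hga : AnalyticAt ℂ g 0)
    (hf0 : f 0 = 0) (hf1 : deriv f 0 = 1)
    (hid : (fun z => g (f z)) =ᶠ[nhds (0:ℂ)] fun z => z) :
    deriv g 0 = 1 ∧ deriv (deriv g) 0 = -(deriv (deriv f) 0) ∧
      deriv (deriv (deriv g)) 0
        = 3 * (deriv (deriv f) 0) ^ 2 - deriv (deriv (deriv f)) 0 := by
  have hf' := aderiv hfa
  have hf'' := aderiv hf'
  have hg' := aderiv hga
  have hg'' := aderiv hg'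
  have hg''' := aderiv hg''
  have hcont : Filter.Tendsto f (nhds 0) (nhds 0) := by
    have := hfa.continuousAt
    rwa [ContinuousAt, hf0] at this
  have evg : ∀ᶠ z in nhds (0:ℂ), AnalyticAt ℂ g (f z) :=
    hcont.eventually hga.eventually_analyticAt
  have evg' : ∀ᶠ z in nhds (0:ℂ), AnalyticAt ℂ (deriv g) (f z) :=
    hcont.eventually hg'.eventually_analyticAt
  have evg'' : ∀ᶠ z in nhds (0:ℂ), AnalyticAt ℂ (deriv (deriv g)) (f z) :=
    hcont.eventually hg''.eventually_analyticAt
  have ev1 : deriv (fun z => g (f z)) =ᶠ[nhds (0:ℂ)] fun z => deriv g (f z) * deriv f z := by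
    filter_upwards [evg, hfa.eventually_analyticAt] with z h1 h2
    have := deriv_comp z h1.differentiableAt h2.differentiableAt
    exact this
  have evK : (fun z => deriv g (f z) * deriv f z) =ᶠ[nhds (0:ℂ)] fun _ => (1:ℂ) := by
    refine ev1.symm.trans (hid.deriv.trans (Filter.EventuallyEq.of_eq ?_))
    funext z
    exact deriv_id z
  have g1 : deriv g 0 = 1 := by
    have H := evK.eq_of_nhds
    simp only [hf0, hf1, mul_one] at H
    exact H
  have ev2 : deriv (fun z => deriv g (f z) * deriv f z) =ᶠ[nhds (0:ℂ)]
      fun z => (deriv (deriv g) (f z) * deriv f z) * deriv f z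
        + deriv g (f z) * deriv (deriv f) z := by
    filter_upwards [evg', evg'', hfa.eventually_analyticAt, hf'.eventually_analyticAt]
      with z h1 h2 h3 h4
    have hc : deriv (fun y => deriv g (f y)) z = deriv (deriv g) (f z) * deriv f z := by
      have := deriv_comp z h1.differentiableAt h3.differentiableAt
      exact this
    have hcd : DifferentiableAt ℂ (fun y => deriv g (f y)) z := by
      have := DifferentiableAt.comp z h1.differentiableAt h3.differentiableAt
      exact this
    rw [deriv_fun_mul hcd h4.differentiableAt, hc]
  have ev2' : (fun z => (deriv (deriv g) (f z) * deriv f z) * deriv f z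
      + deriv g (f z) * deriv (deriv f) z) =ᶠ[nhds (0:ℂ)] fun _ => (0:ℂ) := by
    refine ev2.symm.trans (evK.deriv.trans (Filter.EventuallyEq.of_eq ?_))
    funext z
    exact deriv_const z 1
  have g2 : deriv (deriv g) 0 = -(deriv (deriv f) 0) := by
    have H := ev2'.eq_of_nhds
    simp only [hf0, hf1, g1, mul_one, one_mul] at H
    linear_combination H
  refine ⟨g1, g2, ?_⟩
  -- third derivative
  have hF0 : HasDerivAt f 1 0 := by
    have := hfa.differentiableAt.hasDerivAt
    rwa [hf1] at this
  have hgat : ∀ u : ℂ → ℂ, AnalyticAt ℂ u 0 → HasDerivAt u (deriv u 0) (f 0) := by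
    intro u hu
    rw [hf0]
    exact hu.differentiableAt.hasDerivAt
  have hX : HasDerivAt (fun z => deriv (deriv g) (f z))
      (deriv (deriv (deriv g)) 0 * 1) 0 := by
    have := (hgat _ hg'').comp 0 hF0
    exact this
  have hY : HasDerivAt (fun z => deriv g (f z)) (deriv (deriv g) 0 * 1) 0 := by
    have := (hgat _ hg').comp 0 hF0
    exact this
  have hf'0 : HasDerivAt (deriv f) (deriv (deriv f) 0) 0 := hf'.differentiableAt.hasDerivAt
  have hf''0 : HasDerivAt (deriv (deriv f)) (deriv (deriv (deriv f)) 0) 0 :=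
    hf''.differentiableAt.hasDerivAt
  have hBig := ((hX.fun_mul hf'0).fun_mul hf'0).fun_add (hY.fun_mul hf''0)
  have H3 : deriv (fun z => (deriv (deriv g) (f z) * deriv f z) * deriv f z
      + deriv g (f z) * deriv (deriv f) z) 0 = 0 := by
    rw [ev2'.deriv_eq]
    exact deriv_const 0 0
  rw [hBig.deriv, hf0, hf1, g1, g2] at H3
  linear_combination H3
private lemma moebius_den_ne {a ζ : ℂ} (ha : ‖a‖ < 1) (hζ : ‖ζ‖ < 1) :
    (1 - (starRingEnd ℂ) a * ζ) ≠ 0 := by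
  intro h
  have h1 : ‖(starRingEnd ℂ) a * ζ‖ < 1 := by
    rw [norm_mul, RCLike.norm_conj]
    nlinarith [norm_nonneg a, norm_nonneg ζ]
  have h2 : (starRingEnd ℂ) a * ζ = 1 := by
    have := sub_eq_zero.mp h
    exact this.symm
  rw [h2] at h1
  simp at h1

private lemma moebius_lt_one {a ζ : ℂ} (ha : ‖a‖ < 1) (hζ : ‖ζ‖ < 1) :
    ‖(a - ζ) / (1 - (starRingEnd ℂ) a * ζ)‖ < 1 := by
  have hden := moebius_den_ne ha hζ
  rw [norm_div, div_lt_one (norm_pos_iff.mpr hden)]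
  have key : Complex.normSq (1 - (starRingEnd ℂ) a * ζ) - Complex.normSq (a - ζ)
      = (1 - Complex.normSq a) * (1 - Complex.normSq ζ) := by
    simp only [Complex.normSq_apply, Complex.sub_re, Complex.sub_im, Complex.mul_re,
      Complex.mul_im, Complex.conj_re, Complex.conj_im, Complex.one_re, Complex.one_im]
    ring
  have ea : ‖a‖ ^ 2 = Complex.normSq a := by rw [Complex.sq_norm]
  have eζ : ‖ζ‖ ^ 2 = Complex.normSq ζ := by rw [Complex.sq_norm]
  have ha2 : Complex.normSq a < 1 := by nlinarith [norm_nonneg a]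
  have hζ2 : Complex.normSq ζ < 1 := by nlinarith [norm_nonneg ζ]
  have hpos : 0 < (1 - Complex.normSq a) * (1 - Complex.normSq ζ) := by nlinarith
  have hlt : Complex.normSq (a - ζ) < Complex.normSq (1 - (starRingEnd ℂ) a * ζ) := by linarith
  have e1 : ‖a - ζ‖ ^ 2 = Complex.normSq (a - ζ) := by
    rw [Complex.sq_norm]
  have e2 : ‖1 - (starRingEnd ℂ) a * ζ‖ ^ 2 = Complex.normSq (1 - (starRingEnd ℂ) a * ζ) := by
    rw [Complex.sq_norm]
  nlinarith [norm_nonneg (a - ζ), norm_nonneg (1 - (starRingEnd ℂ) a * ζ)]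

private lemma schwarz2 (w : ℂ → ℂ) (hw : AnalyticOnNhd ℂ w (ball 0 1)) (hw0 : w 0 = 0)
    (hb : ∀ z ∈ ball (0:ℂ) 1, ‖w z‖ < 1) :
    ‖deriv (deriv w) 0‖ ≤ 2 * (1 - ‖deriv w 0‖ ^ 2) := by
  have h01 : (0:ℂ) ∈ ball (0:ℂ) 1 := by simp
  have hd : DifferentiableOn ℂ w (ball 0 1) := fun z hz =>
    (hw z hz).differentiableAt.differentiableWithinAt
  have maps : MapsTo w (ball (0:ℂ) 1) (ball (w 0) 1) := by
    intro z hz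
    rw [hw0]
    simpa [mem_ball, dist_eq_norm] using hb z hz
  set q := dslope w 0 with hq_def
  have qb : ∀ z ∈ ball (0:ℂ) 1, ‖q z‖ ≤ 1 := fun z hz => by
    simpa using Complex.norm_dslope_le_div_of_mapsTo_ball hd (maps.mono_right ball_subset_closedBall) hz
  have qdiff : DifferentiableOn ℂ q (ball 0 1) :=
    (differentiableOn_dslope (isOpen_ball.mem_nhds h01)).mpr hd
  have qan : AnalyticOnNhd ℂ q (ball 0 1) := qdiff.analyticOnNhd isOpen_ball
  have qa0 : AnalyticAt ℂ q 0 := qan 0 h01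
  have q0 : q 0 = deriv w 0 := dslope_same w 0
  have evw : w =ᶠ[nhds (0:ℂ)] fun z => z * q z := by
    filter_upwards [isOpen_ball.mem_nhds h01] with z hz
    rcases eq_or_ne z 0 with rfl | hne
    · simp [hw0]
    · rw [hq_def, dslope_of_ne w hne, slope_def_field, hw0]
      field_simp
      ring
  have W2 : deriv (deriv w) 0 = 2 * deriv q 0 := by
    have ev1 : deriv w =ᶠ[nhds (0:ℂ)] fun z => q z + z * deriv q z := by
      refine (evw.deriv).trans ?_
      filter_upwards [qa0.eventually_analyticAt] with z h1
      rw [deriv_fun_mul differentiableAt_fun_id h1.differentiableAt, deriv_id'']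
      ring
    rw [ev1.deriv_eq]
    have hA : HasDerivAt q (deriv q 0) 0 := qa0.differentiableAt.hasDerivAt
    have hB : HasDerivAt (fun z => z * deriv q z) (1 * deriv q 0 + 0 * deriv (deriv q) 0) 0 :=
      (hasDerivAt_id 0).mul (aderiv qa0).differentiableAt.hasDerivAt
    rw [(hA.fun_add hB).deriv]
    ring
  have key : ‖deriv q 0‖ ≤ 1 - ‖q 0‖ ^ 2 := by
    by_cases hmax : ∃ z0 ∈ ball (0:ℂ) 1, ‖q z0‖ = 1
    · obtain ⟨z0, hz0, hqz0⟩ := hmax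
      have hmax' : IsMaxOn (norm ∘ q) (ball (0:ℂ) 1) z0 := fun z hz => by
        simp only [Function.comp_apply, hqz0]
        exact qb z hz
      have hconst := Complex.eqOn_of_isPreconnected_of_isMaxOn_norm
        (convex_ball (0:ℂ) 1).isPreconnected isOpen_ball qdiff hz0 hmax'
      have evq : q =ᶠ[nhds (0:ℂ)] fun _ => q z0 := by
        filter_upwards [isOpen_ball.mem_nhds h01] with z hz
        exact hconst hz
      have dq0 : deriv q 0 = 0 := by
        rw [evq.deriv_eq]
        exact deriv_const 0 _
      have q01 : ‖q 0‖ = 1 := by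
        rw [evq.eq_of_nhds]
        exact hqz0
      rw [dq0, q01]
      simp
    · push_neg at hmax
      have qlt : ∀ z ∈ ball (0:ℂ) 1, ‖q z‖ < 1 := fun z hz =>
        lt_of_le_of_ne (qb z hz) (hmax z hz)
      set a := q 0 with ha_def
      have ha : ‖a‖ < 1 := qlt 0 h01
      set φ : ℂ → ℂ := fun ζ => (a - ζ) / (1 - (starRingEnd ℂ) a * ζ) with hφ_def
      have hψd : DifferentiableOn ℂ (fun z => φ (q z)) (ball 0 1) := by
        intro z hz
        have h1 := moebius_den_ne ha (qlt z hz)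
        have h2 : DifferentiableAt ℂ φ (q z) := by
          apply DifferentiableAt.div
          · exact (differentiableAt_const a).sub differentiableAt_fun_id
          · exact (differentiableAt_const _).sub ((differentiableAt_const _).mul differentiableAt_fun_id)
          · exact h1
        exact (h2.comp z (qan z hz).differentiableAt).differentiableWithinAt
      have ψ0 : φ (q 0) = 0 := by
        simp [hφ_def, ← ha_def]
      have mapsψ : MapsTo (fun z => φ (q z)) (ball (0:ℂ) 1) (ball (φ (q 0)) 1) := by
        intro z hz
        rw [ψ0]
        simp only [mem_ball, dist_eq_norm, sub_zero]
        exact moebius_lt_one ha (qlt z hz)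
      have hval := Complex.norm_deriv_le_div_of_mapsTo_ball hψd (mapsψ.mono_right ball_subset_closedBall) one_pos
      set s : ℂ := 1 - (starRingEnd ℂ) a * a with hs_def
      have hs0 : s ≠ 0 := moebius_den_ne ha ha
      have hφ' : HasDerivAt φ (-(1 / s)) a := by
        have hu : HasDerivAt (fun ζ : ℂ => a - ζ) (-1) a := (hasDerivAt_id a).const_sub a
        have hv : HasDerivAt (fun ζ : ℂ => 1 - (starRingEnd ℂ) a * ζ) (-((starRingEnd ℂ) a)) a := by
          simpa using ((hasDerivAt_id a).const_mul ((starRingEnd ℂ) a)).const_sub 1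
        have := hu.fun_div hv hs0
        refine this.congr_deriv ?_
        rw [← hs_def, sub_self, zero_mul, sub_zero]
        field_simp
      have hq0d : HasDerivAt q (deriv q 0) 0 := qa0.differentiableAt.hasDerivAt
      have hψ' : HasDerivAt (fun z => φ (q z)) (-(1 / s) * deriv q 0) 0 := by
        have := hφ'.comp 0 hq0d
        exact this
      rw [hψ'.deriv] at hval
      have hsnorm : ‖s‖ = 1 - ‖a‖ ^ 2 := by
        have : s = ((1 - Complex.normSq a : ℝ) : ℂ) := by
          rw [hs_def]
          have : (starRingEnd ℂ) a * a = (Complex.normSq a : ℂ) := by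
            rw [mul_comm]
            exact Complex.mul_conj a
          rw [this]
          push_cast
          ring
        have ea : ‖a‖ ^ 2 = Complex.normSq a := by rw [Complex.sq_norm]
        have ha2 : Complex.normSq a < 1 := by nlinarith [norm_nonneg a]
        rw [this, Complex.norm_real, Real.norm_eq_abs, ea]
        exact _root_.abs_of_nonneg (by linarith)
      have hval' : ‖deriv q 0‖ / ‖s‖ ≤ 1 := by
        have e : ‖-(1 / s) * deriv q 0‖ = ‖deriv q 0‖ / ‖s‖ := by
          rw [norm_mul, norm_neg, norm_div, norm_one]
          ring
        rw [e] at hval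
        simpa using hval
      have hfin : ‖deriv q 0‖ ≤ ‖s‖ := by
        have hspos : 0 < ‖s‖ := norm_pos_iff.mpr hs0
        calc ‖deriv q 0‖ = ‖deriv q 0‖ / ‖s‖ * ‖s‖ := (div_mul_cancel₀ _ hspos.ne').symm
          _ ≤ 1 * ‖s‖ := mul_le_mul_of_nonneg_right hval' hspos.le
          _ = ‖s‖ := one_mul _
      rw [hsnorm] at hfin
      exact hfin
  have : ‖(2 : ℂ) * deriv q 0‖ = 2 * ‖deriv q 0‖ := by
    rw [norm_mul]
    norm_num
  rw [W2, ← q0, this]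
  nlinarith [key, norm_nonneg (deriv q 0), norm_nonneg (q 0)]

set_option maxHeartbeats 1000000 in
theorem SLB_second_coeff_bound (τ : ℝ) (hτ : τ = (1 - Real.sqrt 5) / 2)
    (lam : ℝ) (hlam : 1 ≤ lam)
    (f g : ℂ → ℂ)
    (hf : AnalyticOnNhd ℂ f (Metric.ball 0 1))
    (hfi : Set.InjOn f (Metric.ball 0 1))
    (hf0 : f 0 = 0) (hf1 : deriv f 0 = 1)
    (hg : AnalyticOnNhd ℂ g (Metric.ball 0 1))
    (hgi : Set.InjOn g (Metric.ball 0 1)) (hg0 : g 0 = 0)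
    (hgf : ∀ z ∈ Metric.ball (0 : ℂ) 1, f z ∈ Metric.ball (0 : ℂ) 1 → g (f z) = z)
    (hfg : ∀ w ∈ Metric.ball (0 : ℂ) 1, g w ∈ Metric.ball (0 : ℂ) 1 → f (g w) = w)
    (p : ℂ → ℂ)
    (hp : ∀ z : ℂ, p z =
      (1 + (τ : ℂ) ^ 2 * z ^ 2) / (1 - (τ : ℂ) * z - (τ : ℂ) ^ 2 * z ^ 2))
    (hsubf : ∃ w : ℂ → ℂ, AnalyticOnNhd ℂ w (Metric.ball 0 1) ∧ w 0 = 0 ∧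
      (∀ z ∈ Metric.ball (0 : ℂ) 1, ‖w z‖ < 1) ∧
      ∀ z ∈ Metric.ball (0 : ℂ) 1, z ≠ 0 →
        z * (deriv f z) ^ (lam : ℂ) / f z = p (w z))
    (hsubg : ∃ w : ℂ → ℂ, AnalyticOnNhd ℂ w (Metric.ball 0 1) ∧ w 0 = 0 ∧
      (∀ z ∈ Metric.ball (0 : ℂ) 1, ‖w z‖ < 1) ∧
      ∀ z ∈ Metric.ball (0 : ℂ) 1, z ≠ 0 →
        z * (deriv g z) ^ (lam : ℂ) / g z = p (w z)) :
    ‖iteratedDeriv 2 f 0 / 2‖ ≤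
      |τ| / Real.sqrt ((2 * lam - 1) * (τ * (3 - 5 * lam) + 2 * lam - 1)) := by
  obtain ⟨w, hwA, hw0, hwb, hweq⟩ := hsubf
  obtain ⟨v, hvA, hv0, hvb, hveq⟩ := hsubg
  have h01 : (0:ℂ) ∈ ball (0:ℂ) 1 := by simp
  set t : ℂ := (τ : ℂ) with ht_def
  set L : ℂ := (lam : ℂ) with hL_def
  have hfa : AnalyticAt ℂ f 0 := hf 0 h01
  have hga : AnalyticAt ℂ g 0 := hg 0 h01
  have hwa : AnalyticAt ℂ w 0 := hwA 0 h01
  have hva : AnalyticAt ℂ v 0 := hvA 0 h01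
  have hfz : ∀ z ∈ ball (0:ℂ) 1, z ≠ 0 → f z ≠ 0 := by
    intro z hz hne h
    exact hne (hfi hz h01 (by rw [h, hf0]))
  have hgz : ∀ z ∈ ball (0:ℂ) 1, z ≠ 0 → g z ≠ 0 := by
    intro z hz hne h
    exact hne (hgi hz h01 (by rw [h, hg0]))
  have mkeq : ∀ (F W : ℂ → ℂ), AnalyticAt ℂ W 0 → W 0 = 0 →
      (∀ z ∈ ball (0:ℂ) 1, z ≠ 0 → F z ≠ 0) →
      (∀ z ∈ ball (0:ℂ) 1, z ≠ 0 → z * (deriv F z) ^ L / F z = p (W z)) →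
      F 0 = 0 →
      (fun z => z * (deriv F z) ^ L * (1 - t * W z - t ^ 2 * W z ^ 2)) =ᶠ[nhds (0:ℂ)]
        (fun z => F z * (1 + t ^ 2 * W z ^ 2)) := by
    intro F W hWa hW0 hFz hFeq hF0
    have hcont : ContinuousAt (fun z => 1 - t * W z - t ^ 2 * W z ^ 2) 0 :=
      (continuousAt_const.sub (continuousAt_const.mul hWa.continuousAt)).sub
        (continuousAt_const.mul (hWa.continuousAt.pow 2))
    have hDne : ∀ᶠ z in nhds (0:ℂ), (1 - t * W z - t ^ 2 * W z ^ 2) ≠ 0 := by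
      have hval : (fun z => 1 - t * W z - t ^ 2 * W z ^ 2) 0 ≠ 0 := by
        simp [hW0]
      exact hcont.eventually_ne hval
    filter_upwards [isOpen_ball.mem_nhds h01, hDne] with z hz hD
    rcases eq_or_ne z 0 with rfl | hne
    · simp [hF0]
    · have h1 := hFeq z hz hne
      rw [hp] at h1
      rw [div_eq_div_iff (hFz z hz hne) hD] at h1
      linear_combination h1
  have heqf := mkeq f w hwa hw0 hfz hweq hf0
  obtain ⟨Ef1, Ef2⟩ := subord_coeffs t L f w hfa hwa hf0 hf1 hw0 heqf
  have hidgf : (fun z => g (f z)) =ᶠ[nhds (0:ℂ)] fun z => z := by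
    have hfb : ∀ᶠ z in nhds (0:ℂ), f z ∈ ball (0:ℂ) 1 := by
      apply hfa.continuousAt.eventually_mem
      rw [hf0]
      exact isOpen_ball.mem_nhds h01
    filter_upwards [isOpen_ball.mem_nhds h01, hfb] with z hz hzf
    exact hgf z hz hzf
  obtain ⟨g1, g2, g3⟩ := inv_coeffs f g hfa hga hf0 hf1 hidgf
  have heqg := mkeq g v hva hv0 hgz hveq hg0
  obtain ⟨Eg1, Eg2⟩ := subord_coeffs t L g v hga hva hg0 g1 hv0 heqg
  rw [g2] at Eg1 Eg2
  rw [g3] at Eg2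
  set F2 := deriv (deriv f) 0 with hF2_def
  set F3 := deriv (deriv (deriv f)) 0 with hF3_def
  set W1 := deriv w 0 with hW1_def
  set W2 := deriv (deriv w) 0 with hW2_def
  set V1 := deriv v 0 with hV1_def
  set V2 := deriv (deriv v) 0 with hV2_def
  have etW1 : 2 * t * W1 = (2 * L - 1) * F2 := by linear_combination -Ef1
  have etV1 : 2 * t * V1 = -((2 * L - 1) * F2) := by linear_combination -Eg1
  have sqW1 : 4 * t ^ 2 * W1 ^ 2 = (2 * L - 1) ^ 2 * F2 ^ 2 := by
    linear_combination (2 * t * W1 + (2 * L - 1) * F2) * etW1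
  have sqV1 : 4 * t ^ 2 * V1 ^ 2 = (2 * L - 1) ^ 2 * F2 ^ 2 := by
    linear_combination (2 * t * V1 - (2 * L - 1) * F2) * etV1
  have key : t * W2 + t * V2 + (2 * L - 1) * (5 * L - 3) * F2 ^ 2 = 0 := by
    linear_combination (-1/3 : ℂ) * Ef2 + (-1/3 : ℂ) * Eg2 - L * F2 * etW1
      + L * F2 * etV1 - sqW1 - sqV1
  -- pass to real inequalities
  have hτ5 : (2:ℝ) < Real.sqrt 5 := by
    have h4 : (2:ℝ) = Real.sqrt 4 := by
      rw [show (4:ℝ) = 2^2 by norm_num, Real.sqrt_sq (by norm_num : (0:ℝ) ≤ 2)]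
    rw [h4]
    exact Real.sqrt_lt_sqrt (by norm_num) (by norm_num)
  have hτneg : τ < 0 := by rw [hτ]; linarith
  have hτabs : |τ| = -τ := abs_of_neg hτneg
  set x := ‖F2‖ with hx_def
  set u := ‖W1‖ with hu_def
  set u' := ‖V1‖ with hu'_def
  have hLnorm : ‖2 * L - 1‖ = 2 * lam - 1 := by
    have e : (2 * L - 1) = ((2 * lam - 1 : ℝ) : ℂ) := by rw [hL_def]; push_cast; ring
    rw [e, Complex.norm_real, Real.norm_eq_abs]
    exact _root_.abs_of_nonneg (by linarith)
  have hL2norm : ‖5 * L - 3‖ = 5 * lam - 3 := by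
    have e : (5 * L - 3) = ((5 * lam - 3 : ℝ) : ℂ) := by rw [hL_def]; push_cast; ring
    rw [e, Complex.norm_real, Real.norm_eq_abs]
    exact _root_.abs_of_nonneg (by linarith)
  have htnorm : ‖t‖ = |τ| := by rw [ht_def, Complex.norm_real, Real.norm_eq_abs]
  have hnW : 2 * |τ| * u = (2 * lam - 1) * x := by
    have hn := congrArg norm etW1
    simp only [norm_mul, htnorm, hLnorm, Complex.norm_ofNat] at hn
    rw [← hx_def, ← hu_def] at hn
    exact hn
  have hnV : 2 * |τ| * u' = (2 * lam - 1) * x := by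
    have hn := congrArg norm etV1
    rw [norm_neg] at hn
    simp only [norm_mul, htnorm, hLnorm, Complex.norm_ofNat] at hn
    rw [← hx_def, ← hu'_def] at hn
    exact hn
  have e1 : 4 * τ^2 * u^2 = (2*lam-1)^2 * x^2 := by
    have h2 : (2 * |τ| * u)^2 = ((2*lam-1) * x)^2 := by rw [hnW]
    linear_combination h2 - 4*u^2*(_root_.sq_abs τ)
  have e2 : 4 * τ^2 * u'^2 = (2*lam-1)^2 * x^2 := by
    have h2 : (2 * |τ| * u')^2 = ((2*lam-1) * x)^2 := by rw [hnV]
    linear_combination h2 - 4*u'^2*(_root_.sq_abs τ)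
  have keyn : (2*lam-1) * (5*lam-3) * x^2 ≤ |τ| * (‖W2‖ + ‖V2‖) := by
    have hk : (2*L-1) * (5*L-3) * F2^2 = -(t*W2 + t*V2) := by linear_combination key
    have hkn := congrArg norm hk
    rw [norm_neg] at hkn
    calc (2*lam-1)*(5*lam-3)*x^2 = ‖(2*L-1)*(5*L-3)*F2^2‖ := by
          rw [norm_mul, norm_mul, hLnorm, hL2norm, norm_pow, ← hx_def]
      _ = ‖t*W2 + t*V2‖ := hkn
      _ ≤ ‖t*W2‖ + ‖t*V2‖ := norm_add_le _ _
      _ = |τ| * ‖W2‖ + |τ| * ‖V2‖ := by rw [norm_mul, norm_mul, htnorm]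
      _ = |τ| * (‖W2‖ + ‖V2‖) := by ring
  have Sw : ‖W2‖ ≤ 2 * (1 - u^2) := schwarz2 w hwA hw0 hwb
  have Sv : ‖V2‖ ≤ 2 * (1 - u'^2) := schwarz2 v hvA hv0 hvb
  have main : x^2 * ((2*lam-1) * (τ*(3-5*lam) + 2*lam - 1)) ≤ 4*τ^2 := by
    have hsum : ‖W2‖ + ‖V2‖ ≤ 2*(1-u^2) + 2*(1-u'^2) := add_le_add Sw Sv
    have h1 : (2*lam-1)*(5*lam-3)*x^2 ≤ |τ| * (2*(1-u^2) + 2*(1-u'^2)) :=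
      le_trans keyn (mul_le_mul_of_nonneg_left hsum (abs_nonneg τ))
    rw [hτabs] at h1
    have h2 := mul_le_mul_of_nonneg_right h1 (by linarith : (0:ℝ) ≤ -τ)
    nlinarith [h2, e1, e2]
  have hid2 : iteratedDeriv 2 f 0 = F2 := by
    rw [iteratedDeriv_succ, iteratedDeriv_one]
  rw [hid2, norm_div]
  have h2n : ‖(2:ℂ)‖ = 2 := by simp
  rw [h2n, ← hx_def]
  have hRpos : 0 < (2*lam-1) * (τ*(3-5*lam) + 2*lam - 1) := by
    nlinarith [mul_pos (neg_pos.mpr hτneg) (by linarith : (0:ℝ) < 5*lam-3)]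
  rw [div_le_div_iff₀ (show (0:ℝ) < 2 by norm_num) (Real.sqrt_pos.mpr hRpos)]
  have hsq : (x * Real.sqrt ((2*lam-1) * (τ*(3-5*lam) + 2*lam - 1)))^2 ≤ (|τ| * 2)^2 := by
    rw [mul_pow, Real.sq_sqrt hRpos.le]
    nlinarith [main, _root_.sq_abs τ]
  have h0 : 0 ≤ x * Real.sqrt ((2*lam-1) * (τ*(3-5*lam) + 2*lam - 1)) := by positivity
  have h0' : 0 ≤ |τ| * 2 := by positivity
  have := Real.sqrt_le_sqrt hsq
  rwa [Real.sqrt_sq h0, Real.sqrt_sq h0'] at this
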